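/- The localization of A = ℂ[p, q, t^{±1}]/(pq − (1 − t)) at the element p is isomorphic as a ℂ-algebra to the Laurent polynomial ring ℂ[x^{±1}, y^{±1}], via p ↦ x, q ↦ (1 + y)x^{-1}, t ↦ −y. -/

import Mathlib

noncomputable section

open MvPolynomial

set_option synthInstance.maxHeartbeats 1000000
set_option maxHeartbeats 1000000

/-- The relations defining A = ℂ[p,q,t,t⁻¹]/(pq − (1 − t)): the variables are
p = X 0, q = X 1, t = X 2, s = X 3 (s playing the role of t⁻¹). -/
def ARel : Ideal (MvPolynomial (Fin 4) ℂ) :=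
  Ideal.span {X 0 * X 1 - (1 - X 2), X 2 * X 3 - 1}

/-- The ring A = ℂ[p,q,t,t⁻¹]/(pq − (1 − t)). -/
abbrev ARing := MvPolynomial (Fin 4) ℂ ⧸ ARel

/-- The generator p of A. -/
def pA : ARing := Ideal.Quotient.mk ARel (X 0)
/-- The generator q of A. -/
def qA : ARing := Ideal.Quotient.mk ARel (X 1)
/-- The generator t of A. -/
def tA : ARing := Ideal.Quotient.mk ARel (X 2)
/-- The generator t⁻¹ of A. -/
def sA : ARing := Ideal.Quotient.mk ARel (X 3)

/-- The Laurent polynomial ring ℂ[x^{±1}, y^{±1}]. -/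
abbrev LaurentTwo := AddMonoidAlgebra ℂ (ℤ × ℤ)

/-- The monomial x. -/
def xL : LaurentTwo := AddMonoidAlgebra.single (1, 0) 1
/-- The monomial x⁻¹. -/
def xLinv : LaurentTwo := AddMonoidAlgebra.single (-1, 0) 1
/-- The monomial y. -/
def yL : LaurentTwo := AddMonoidAlgebra.single (0, 1) 1

/-! ### Auxiliary constructions -/

/-- single a 1, as a unit of the Laurent ring. -/
def uL : Multiplicative (ℤ × ℤ) →* LaurentTwoˣ where
  toFun a :=
    ⟨AddMonoidAlgebra.single a.toAdd 1, AddMonoidAlgebra.single (-a.toAdd) 1,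
      by rw [AddMonoidAlgebra.single_mul_single, add_neg_cancel, mul_one,
        ← AddMonoidAlgebra.one_def],
      by rw [AddMonoidAlgebra.single_mul_single, neg_add_cancel, mul_one,
        ← AddMonoidAlgebra.one_def]⟩
  map_one' := by
    apply Units.ext
    simp [AddMonoidAlgebra.one_def]
  map_mul' a b := by
    apply Units.ext
    simp [AddMonoidAlgebra.single_mul_single]

theorem uL_val (a : ℤ × ℤ) :
    (uL (Multiplicative.ofAdd a) : LaurentTwo) = AddMonoidAlgebra.single a 1 := rfl

/-- The evaluation map from the polynomial ring to the Laurent ring. -/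
def φ0 : MvPolynomial (Fin 4) ℂ →ₐ[ℂ] LaurentTwo :=
  MvPolynomial.aeval ![xL, (1 + yL) * xLinv, -yL, -(AddMonoidAlgebra.single (0, -1) 1)]

theorem xL_mul_xLinv : xL * xLinv = 1 := by
  rw [xL, xLinv, AddMonoidAlgebra.single_mul_single, mul_one,
    show ((1:ℤ),(0:ℤ)) + (-1,0) = 0 by norm_num [Prod.ext_iff], ← AddMonoidAlgebra.one_def]

theorem φ0_rel : ∀ a ∈ ARel, φ0 a = 0 := by
  intro a ha
  have hle : ARel ≤ RingHom.ker φ0.toRingHom := by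
    rw [ARel, Ideal.span_le]
    rintro r hr
    simp only [Set.mem_insert_iff, Set.mem_singleton_iff] at hr
    rcases hr with rfl | rfl <;>
      simp only [SetLike.mem_coe, RingHom.mem_ker, AlgHom.toRingHom_eq_coe,
        RingHom.coe_coe, map_sub, map_mul, map_one, φ0, aeval_X]
    · rw [show ((2 : Fin 4) = (2 : Fin 4)) from rfl]
      simp only [Matrix.cons_val_zero, Matrix.cons_val_one, Matrix.head_cons,
        Matrix.cons_val_two, Matrix.tail_cons]
      have : xL * ((1 + yL) * xLinv) = (1 + yL) * (xL * xLinv) := by ring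
      rw [this, xL_mul_xLinv, mul_one]
      ring
    · simp only [Matrix.cons_val_two, Matrix.cons_val_three, Matrix.tail_cons,
        Matrix.head_cons]
      rw [neg_mul_neg, yL, AddMonoidAlgebra.single_mul_single, mul_one,
        show ((0:ℤ),(1:ℤ)) + (0,-1) = 0 by norm_num [Prod.ext_iff], ← AddMonoidAlgebra.one_def]
      ring
  exact hle ha

/-- The induced map on A. -/
def φA : ARing →ₐ[ℂ] LaurentTwo := Ideal.Quotient.liftₐ ARel φ0 φ0_rel

theorem φA_mk (x : MvPolynomial (Fin 4) ℂ) :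
    φA (Ideal.Quotient.mk ARel x) = φ0 x := rfl

theorem φA_p : φA pA = xL := by
  rw [pA, φA_mk, φ0, aeval_X]; rfl

theorem φA_q : φA qA = (1 + yL) * xLinv := by
  rw [qA, φA_mk, φ0, aeval_X]; rfl

theorem φA_t : φA tA = -yL := by
  rw [tA, φA_mk, φ0, aeval_X]
  simp [Matrix.cons_val_two, Matrix.tail_cons, Matrix.head_cons]

theorem φA_s : φA sA = -(AddMonoidAlgebra.single ((0 : ℤ), (-1 : ℤ)) 1) := by
  rw [sA, φA_mk, φ0, aeval_X]
  simp [Matrix.cons_val_three, Matrix.tail_cons, Matrix.head_cons]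

theorem ts_one : tA * sA = 1 := by
  rw [tA, sA, ← map_mul, ← map_one (Ideal.Quotient.mk ARel), Ideal.Quotient.mk_eq_mk_iff_sub_mem]
  exact Ideal.subset_span (by simp)

theorem pq_rel : pA * qA = 1 - tA := by
  rw [pA, qA, tA, ← map_mul, ← map_one (Ideal.Quotient.mk ARel)]
  rw [show (Ideal.Quotient.mk ARel) 1 - (Ideal.Quotient.mk ARel) (X 2)
      = Ideal.Quotient.mk ARel (1 - X 2) by rw [map_sub]]
  rw [Ideal.Quotient.mk_eq_mk_iff_sub_mem]
  exact Ideal.subset_span (by simp)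

theorem p_isUnit : IsUnit (algebraMap ARing (Localization.Away pA) pA) :=
  IsLocalization.map_units (Localization.Away pA)
    (⟨pA, Submonoid.mem_powers pA⟩ : Submonoid.powers pA)

/-- p as a unit of the localization. -/
def pu : (Localization.Away pA)ˣ := p_isUnit.unit

theorem pu_val : (pu : Localization.Away pA) = algebraMap ARing (Localization.Away pA) pA := rfl

/-- -t as a unit of the localization. -/
def tu : (Localization.Away pA)ˣ where
  val := -(algebraMap ARing (Localization.Away pA) tA)
  inv := -(algebraMap ARing (Localization.Away pA) sA)
  val_inv := by
    have h : (algebraMap ARing (Localization.Away pA)) tA *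
        (algebraMap ARing (Localization.Away pA)) sA = 1 := by rw [← map_mul, ts_one, map_one]
    have h2 : -(algebraMap ARing (Localization.Away pA)) tA *
        -(algebraMap ARing (Localization.Away pA)) sA = (algebraMap ARing (Localization.Away pA)) tA *
        (algebraMap ARing (Localization.Away pA)) sA := by ring
    rw [h2, h]
  inv_val := by
    have h : (algebraMap ARing (Localization.Away pA)) tA *
        (algebraMap ARing (Localization.Away pA)) sA = 1 := by rw [← map_mul, ts_one, map_one]
    have h2 : -(algebraMap ARing (Localization.Away pA)) sA *
        -(algebraMap ARing (Localization.Away pA)) tA = (algebraMap ARing (Localization.Away pA)) tA *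
        (algebraMap ARing (Localization.Away pA)) sA := by ring
    rw [h2, h]

/-- The monomial map into units of the localization. -/
def uLoc : Multiplicative (ℤ × ℤ) →* (Localization.Away pA)ˣ where
  toFun a := pu ^ a.toAdd.1 * tu ^ a.toAdd.2
  map_one' := by simp
  map_mul' a b := by
    simp only [toAdd_mul, Prod.fst_add, Prod.snd_add, zpow_add]
    exact mul_mul_mul_comm _ _ _ _

theorem φA_unit : ∀ y : Submonoid.powers pA, IsUnit (φA y) := by
  rintro ⟨-, n, rfl⟩
  simp only [map_pow, φA_p]
  exact (IsUnit.of_mul_eq_one xLinv xL_mul_xLinv).pow n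

/-- The map from the localization to the Laurent ring. -/
def ψ : Localization.Away pA →ₐ[ℂ] LaurentTwo := IsLocalization.liftAlgHom (M := Submonoid.powers pA) (S := Localization.Away pA) (f := φA) φA_unit

theorem ψ_im (a : ARing) : ψ (algebraMap ARing (Localization.Away pA) a) = φA a := by
  exact IsLocalization.lift_eq _ _

/-- The map from the Laurent ring to the localization. -/
def χ : LaurentTwo →ₐ[ℂ] Localization.Away pA :=
  AddMonoidAlgebra.lift ℂ (Localization.Away pA) (ℤ × ℤ)
    ((Units.coeHom (Localization.Away pA)).comp uLoc)

theorem χ_single (a : ℤ × ℤ) :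
    χ (AddMonoidAlgebra.single a 1) = ((uLoc (Multiplicative.ofAdd a) : _ˣ) : Localization.Away pA) := by
  rw [χ, AddMonoidAlgebra.lift_single, one_smul]; rfl

theorem mulZZ_hom_ext {G : Type*} [Group G] {f g : Multiplicative (ℤ × ℤ) →* G}
    (h1 : f (Multiplicative.ofAdd (1, 0)) = g (Multiplicative.ofAdd (1, 0)))
    (h2 : f (Multiplicative.ofAdd (0, 1)) = g (Multiplicative.ofAdd (0, 1))) : f = g := by
  refine MonoidHom.ext fun a => ?_
  have ha : a = Multiplicative.ofAdd ((1 : ℤ), (0 : ℤ)) ^ a.toAdd.1 *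
      Multiplicative.ofAdd ((0 : ℤ), (1 : ℤ)) ^ a.toAdd.2 := by
    apply Multiplicative.toAdd.injective
    simp [toAdd_zpow, Prod.ext_iff]
  rw [ha]
  simp only [map_mul, map_zpow, h1, h2]

theorem uLoc_x : uLoc (Multiplicative.ofAdd ((1 : ℤ), (0 : ℤ))) = pu := by
  show pu ^ (1 : ℤ) * tu ^ (0 : ℤ) = pu
  simp

theorem uLoc_y : uLoc (Multiplicative.ofAdd ((0 : ℤ), (1 : ℤ))) = tu := by
  show pu ^ (0 : ℤ) * tu ^ (1 : ℤ) = tu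
  simp

theorem comp1 : ψ.comp χ = AlgHom.id ℂ LaurentTwo := by
  have key : (Units.map ψ.toRingHom.toMonoidHom).comp uLoc = uL := by
    apply mulZZ_hom_ext
    · rw [MonoidHom.comp_apply, uLoc_x]
      apply Units.ext
      rw [Units.coe_map]
      show ψ (algebraMap ARing (Localization.Away pA) pA)
        = AddMonoidAlgebra.single ((1 : ℤ), (0 : ℤ)) 1
      rw [ψ_im, φA_p]; rfl
    · rw [MonoidHom.comp_apply, uLoc_y]
      apply Units.ext
      rw [Units.coe_map]
      calc ψ (((tu : _ˣ) : Localization.Away pA))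
          = -ψ ((algebraMap ARing (Localization.Away pA)) tA) := map_neg ψ _
        _ = -φA tA := by rw [ψ_im]
        _ = -(-yL) := by rw [φA_t]
        _ = AddMonoidAlgebra.single ((0 : ℤ), (1 : ℤ)) 1 := neg_neg yL
  apply AddMonoidAlgebra.algHom_ext
  intro a
  rw [AlgHom.comp_apply, χ_single, AlgHom.id_apply]
  have h := DFunLike.congr_fun key (Multiplicative.ofAdd a)
  have hval := congrArg Units.val h
  rw [MonoidHom.comp_apply, Units.coe_map] at hval
  exact hval
  exact Subsingleton.elim _ _

theorem comp2 : χ.comp ψ = AlgHom.id ℂ (Localization.Away pA) := by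
  have hA : ((χ.comp ψ).comp (IsScalarTower.toAlgHom ℂ ARing (Localization.Away pA))) =
      IsScalarTower.toAlgHom ℂ ARing (Localization.Away pA) := by
    apply Ideal.Quotient.algHom_ext
    apply MvPolynomial.algHom_ext
    intro i
    fin_cases i
    · -- p
      show χ (ψ (algebraMap ARing (Localization.Away pA) pA)) =
        algebraMap ARing (Localization.Away pA) pA
      rw [ψ_im, φA_p, xL, χ_single, uLoc_x, pu_val]
    · -- q
      show χ (ψ (algebraMap ARing (Localization.Away pA) qA)) =
        algebraMap ARing (Localization.Away pA) qA
      rw [ψ_im, φA_q, map_mul, map_add, map_one, yL, χ_single, uLoc_y, xLinv, χ_single]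
      have hinv : uLoc (Multiplicative.ofAdd ((-1 : ℤ), (0 : ℤ))) = pu⁻¹ := by
        show pu ^ (-1 : ℤ) * tu ^ (0 : ℤ) = pu⁻¹
        simp
      rw [hinv]
      have htu : ((tu : _ˣ) : Localization.Away pA)
          = -(algebraMap ARing (Localization.Away pA) tA) := rfl
      rw [htu]
      have h1t : (1 : Localization.Away pA) + -(algebraMap ARing (Localization.Away pA) tA)
          = algebraMap ARing (Localization.Away pA) pA *
            algebraMap ARing (Localization.Away pA) qA := by
        rw [← map_mul, pq_rel, map_sub, map_one, sub_eq_add_neg]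
      rw [h1t, ← pu_val]
      calc (pu : Localization.Away pA) * algebraMap ARing (Localization.Away pA) qA *
            ((pu⁻¹ : _ˣ) : Localization.Away pA)
          = algebraMap ARing (Localization.Away pA) qA *
            ((pu : Localization.Away pA) * ((pu⁻¹ : _ˣ) : Localization.Away pA)) := by ring
        _ = algebraMap ARing (Localization.Away pA) qA := by
            rw [← Units.val_mul, mul_inv_cancel, Units.val_one, mul_one]
    · -- t
      show χ (ψ (algebraMap ARing (Localization.Away pA) tA)) =
        algebraMap ARing (Localization.Away pA) tA
      rw [ψ_im, φA_t, map_neg, yL, χ_single, uLoc_y]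
      exact neg_neg (algebraMap ARing (Localization.Away pA) tA)
    · -- s
      show χ (ψ (algebraMap ARing (Localization.Away pA) sA)) =
        algebraMap ARing (Localization.Away pA) sA
      have hinv : uLoc (Multiplicative.ofAdd ((0 : ℤ), (-1 : ℤ))) = tu⁻¹ := by
        show pu ^ (0 : ℤ) * tu ^ (-1 : ℤ) = tu⁻¹
        simp
      rw [ψ_im, φA_s, map_neg, χ_single, hinv]
      exact neg_neg (algebraMap ARing (Localization.Away pA) sA)
  have hR : (χ.comp ψ).toRingHom.comp (algebraMap ARing (Localization.Away pA))
      = (AlgHom.id ℂ (Localization.Away pA)).toRingHom.comp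
          (algebraMap ARing (Localization.Away pA)) :=
    RingHom.ext fun a => AlgHom.congr_fun hA a
  have hfin : (χ.comp ψ).toRingHom = (AlgHom.id ℂ (Localization.Away pA)).toRingHom := by
    exact IsLocalization.ringHom_ext (S := Localization.Away pA) (P := Localization.Away pA) (Submonoid.powers pA) hR
  exact AlgHom.ext fun x => DFunLike.congr_fun hfin x

theorem localization_at_p_iso :
    ∃ e : Localization.Away pA ≃ₐ[ℂ] LaurentTwo,
      e (algebraMap ARing (Localization.Away pA) pA) = xL ∧
      e (algebraMap ARing (Localization.Away pA) qA) = (1 + yL) * xLinv ∧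
      e (algebraMap ARing (Localization.Away pA) tA) = -yL := by
  refine ⟨AlgEquiv.ofAlgHom ψ χ comp1 comp2, ?_, ?_, ?_⟩
  · show ψ _ = _; rw [ψ_im, φA_p]
  · show ψ _ = _; rw [ψ_im, φA_q]
  · show ψ _ = _; rw [ψ_im, φA_t]
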